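/- With ρ = Σ_i r_i |u_i⟩⟨u_i|, σ = Σ_j s_j |v_j⟩⟨v_j| states as above and P(i,j) = r_i |⟨u_i,v_j⟩|², Q(i,j) = s_j |⟨u_i,v_j⟩|², the Hilbert–Schmidt norm satisfies ‖ρ − σ‖₂² ≤ V(P,Q), where V(P,Q) = Σ_{i,j} |P(i,j) − Q(i,j)| is the total variation distance. -/

import Mathlib

open scoped InnerProductSpace

section Aux

variable {H : Type*} [NormedAddCommGroup H] [InnerProductSpace ℂ H]
    [CompleteSpace H] {I : Type*}

omit [CompleteSpace H] in
lemma my_parseval (b : HilbertBasis I ℂ H) (x : H) :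
    HasSum (fun i => ‖⟪(b i : H), x⟫_ℂ‖ ^ 2) (‖x‖ ^ 2) := by
  have h := (b.hasSum_inner_mul_inner x x).mapL Complex.reCLM
  have h1 : ∀ i, Complex.reCLM (⟪x, (b i : H)⟫_ℂ * ⟪(b i : H), x⟫_ℂ)
      = ‖⟪(b i : H), x⟫_ℂ‖ ^ 2 := by
    intro i
    rw [show ⟪x, (b i : H)⟫_ℂ = (starRingEnd ℂ) ⟪(b i : H), x⟫_ℂ from (inner_conj_symm _ _).symm,
      mul_comm, Complex.mul_conj]
    simp [Complex.normSq_eq_norm_sq, ← Complex.ofReal_pow]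
  have h2 : Complex.reCLM ⟪x, x⟫_ℂ = ‖x‖ ^ 2 := by
    simpa using inner_self_eq_norm_sq (𝕜 := ℂ) x
  exact (h2 ▸ h).congr_fun fun i => (h1 i).symm

lemma my_summable (b : HilbertBasis I ℂ H) (t : I → ℝ) (ht0 : ∀ i, 0 ≤ t i)
    (ht1 : ∀ i, t i ≤ 1) (w : H) :
    Summable (fun i => (t i : ℂ) • ⟪(b i : H), w⟫_ℂ • (b i : H)) := by
  set f : I → ℂ := fun i => (t i : ℂ) * b.repr w i with hf
  have hmem : Memℓp f 2 := by
    apply memℓp_gen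
    have hfw : Summable fun i => ‖b.repr w i‖ ^ (2 : ENNReal).toReal :=
      (lp.memℓp (b.repr w)).summable (by norm_num)
    refine Summable.of_nonneg_of_le (fun i => ?_) (fun i => ?_) hfw
    · positivity
    · have : ‖f i‖ ≤ ‖b.repr w i‖ := by
        rw [hf]
        simp only [norm_mul, Complex.norm_real]
        calc |t i| * ‖b.repr w i‖ ≤ 1 * ‖b.repr w i‖ := by
              apply mul_le_mul_of_nonneg_right _ (norm_nonneg _)
              rw [abs_of_nonneg (ht0 i)]; exact ht1 i
          _ = ‖b.repr w i‖ := one_mul _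
      exact Real.rpow_le_rpow (norm_nonneg _) this (by norm_num)
  have h := b.hasSum_repr_symm ⟨f, hmem⟩
  refine h.summable.congr fun i => ?_
  show f i • (b i : H) = _
  rw [hf]
  simp only [b.repr_apply_apply, mul_smul]

lemma my_hasSum_inner (b : HilbertBasis I ℂ H) (t : I → ℝ) (ht0 : ∀ i, 0 ≤ t i)
    (ht1 : ∀ i, t i ≤ 1) (w x : H) :
    HasSum (fun i => (t i : ℂ) * (⟪(b i : H), w⟫_ℂ * ⟪x, (b i : H)⟫_ℂ))
      ⟪x, ∑' i, (t i : ℂ) • ⟪(b i : H), w⟫_ℂ • (b i : H)⟫_ℂ := by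
  have h := ((my_summable b t ht0 ht1 w).hasSum).mapL (innerSL ℂ x)
  refine h.congr_fun fun i => ?_
  simp [inner_smul_right]

lemma my_collapse (b : HilbertBasis I ℂ H) (t : I → ℝ) (ht0 : ∀ i, 0 ≤ t i)
    (ht1 : ∀ i, t i ≤ 1) (w : H) (i : I) :
    ⟪(b i : H), ∑' i', (t i' : ℂ) • ⟪(b i' : H), w⟫_ℂ • (b i' : H)⟫_ℂ
      = (t i : ℂ) * ⟪(b i : H), w⟫_ℂ := by
  classical
  have h := (my_hasSum_inner b t ht0 ht1 w (b i)).tsum_eq.symm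
  rw [h, tsum_eq_single i]
  · have : ⟪((b i : H)), (b i : H)⟫_ℂ = 1 := by
      have := orthonormal_iff_ite.mp b.orthonormal i i
      simpa using this
    rw [this]; ring
  · intro i' hne
    have : ⟪((b i : H)), (b i' : H)⟫_ℂ = 0 := by
      have := orthonormal_iff_ite.mp b.orthonormal i i'
      simpa [hne.symm] using this
    rw [this]; ring

lemma my_selfadj (b : HilbertBasis I ℂ H) (t : I → ℝ) (ht0 : ∀ i, 0 ≤ t i)
    (ht1 : ∀ i, t i ≤ 1) (T : H →L[ℂ] H)
    (hT : ∀ w, T w = ∑' i, (t i : ℂ) • ⟪(b i : H), w⟫_ℂ • (b i : H)) (x w : H) :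
    ⟪T x, w⟫_ℂ = ⟪x, T w⟫_ℂ := by
  have h1 : HasSum (fun i => (t i : ℂ) * (⟪(b i : H), x⟫_ℂ * ⟪w, (b i : H)⟫_ℂ)) ⟪w, T x⟫_ℂ := by
    rw [hT x]; exact my_hasSum_inner b t ht0 ht1 x w
  have h2 : HasSum (fun i => (t i : ℂ) * (⟪(b i : H), w⟫_ℂ * ⟪x, (b i : H)⟫_ℂ)) ⟪x, T w⟫_ℂ := by
    rw [hT w]; exact my_hasSum_inner b t ht0 ht1 w x
  have h3 := h1.star
  rw [show star ⟪w, T x⟫_ℂ = ⟪T x, w⟫_ℂ from inner_conj_symm _ _] at h3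
  refine h3.unique (h2.congr_fun fun i => ?_)
  simp only [star_mul', Complex.star_def, inner_conj_symm, Complex.conj_ofReal]
  ring

end Aux

set_option maxHeartbeats 1000000 in
/-- With `ρ, σ` states as above and `P(i,j) = r_i |⟨u_i,v_j⟩|²`,
`Q(i,j) = s_j |⟨u_i,v_j⟩|²`, the squared Hilbert–Schmidt norm of `ρ − σ` (computed in
any orthonormal basis) is bounded by the total variation distance
`V(P,Q) = Σ_{i,j} |P(i,j) − Q(i,j)|`. -/
theorem stmt6 {H : Type*} [NormedAddCommGroup H] [InnerProductSpace ℂ H]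
    [CompleteSpace H] [TopologicalSpace.SeparableSpace H]
    {I : Type*} [Countable I]
    (r s : I → ℝ) (hr : ∀ i, 0 ≤ r i) (hs : ∀ j, 0 ≤ s j)
    (hr1 : HasSum r 1) (hs1 : HasSum s 1)
    (u v : HilbertBasis I ℂ H)
    (ρ σ : H →L[ℂ] H)
    (hρ : ∀ w, ρ w = ∑' i, (r i : ℂ) • ⟪(u i : H), w⟫_ℂ • (u i : H))
    (hσ : ∀ w, σ w = ∑' j, (s j : ℂ) • ⟪(v j : H), w⟫_ℂ • (v j : H))
    {J : Type*} (e : HilbertBasis J ℂ H) :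
    ∑' k, ‖(ρ - σ) (e k)‖ ^ 2
      ≤ ∑' p : I × I,
          |r p.1 * ‖⟪(u p.1 : H), (v p.2 : H)⟫_ℂ‖ ^ 2
            - s p.2 * ‖⟪(u p.1 : H), (v p.2 : H)⟫_ℂ‖ ^ 2| := by
  classical
  have hr' : ∀ i, r i ≤ 1 := fun i => le_hasSum hr1 i fun j _ => hr j
  have hs' : ∀ j, s j ≤ 1 := fun j => le_hasSum hs1 j fun i _ => hs i
  set c : I → I → ℝ := fun i j => ‖⟪(u i : H), (v j : H)⟫_ℂ‖ ^ 2 with hc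
  have hcnn : ∀ i j, 0 ≤ c i j := fun i j => by positivity
  -- basic inner product identities
  have hσj : ∀ (j) (w), ⟪(v j : H), σ w⟫_ℂ = (s j : ℂ) * ⟪(v j : H), w⟫_ℂ := fun j w => by
    rw [hσ w]; exact my_collapse v s hs hs' w j
  have hρsa : ∀ x w, ⟪ρ x, w⟫_ℂ = ⟪x, ρ w⟫_ℂ := my_selfadj u r hr hr' ρ hρ
  have hσsa : ∀ x w, ⟪σ x, w⟫_ℂ = ⟪x, σ w⟫_ℂ := my_selfadj v s hs hs' σ hσ
  have hAsa : ∀ x w, ⟪(ρ - σ) x, w⟫_ℂ = ⟪x, (ρ - σ) w⟫_ℂ := fun x w => by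
    simp only [ContinuousLinearMap.sub_apply, inner_sub_left, inner_sub_right, hρsa, hσsa]
  have hρu : ∀ i, ρ (u i) = (r i : ℂ) • (u i : H) := by
    intro i
    rw [hρ (u i), tsum_eq_single i]
    · have h1 : ⟪((u i : H)), (u i : H)⟫_ℂ = 1 := by
        have := orthonormal_iff_ite.mp u.orthonormal i i; simpa using this
      rw [h1, one_smul]
    · intro i' hne
      have h0 : ⟪((u i' : H)), (u i : H)⟫_ℂ = 0 := by
        have := orthonormal_iff_ite.mp u.orthonormal i' i; simpa [hne] using this
      rw [h0, zero_smul, smul_zero]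
  have hvA : ∀ i j, ⟪(v j : H), (ρ - σ) (u i)⟫_ℂ
      = ((r i - s j : ℝ) : ℂ) * ⟪(v j : H), (u i : H)⟫_ℂ := by
    intro i j
    rw [ContinuousLinearMap.sub_apply, inner_sub_right, hρu i, inner_smul_right, hσj j (u i)]
    push_cast; ring
  -- Parseval applications
  have hc1 : ∀ i, HasSum (fun j => c i j) 1 := by
    intro i
    have hn : ‖(u i : H)‖ ^ 2 = 1 := by rw [u.orthonormal.1 i]; norm_num
    exact (hn ▸ my_parseval v (u i)).congr_fun fun j => by rw [hc]; rw [norm_inner_symm]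
  have hc2 : ∀ j, HasSum (fun i => c i j) 1 := by
    intro j
    have hn : ‖(v j : H)‖ ^ 2 = 1 := by rw [v.orthonormal.1 j]; norm_num
    exact (hn ▸ my_parseval u (v j)).congr_fun fun i => rfl
  have hAu : ∀ i, HasSum (fun j => (r i - s j) ^ 2 * c i j) (‖(ρ - σ) (u i)‖ ^ 2) := by
    intro i
    refine (my_parseval v ((ρ - σ) (u i))).congr_fun fun j => ?_
    rw [hvA i j, norm_mul, mul_pow, Complex.norm_real, Real.norm_eq_abs, sq_abs,
      norm_inner_symm (v j : H), hc]
  set F : I → J → ℝ := fun i k => ‖⟪(u i : H), (ρ - σ) (e k)⟫_ℂ‖ ^ 2 with hFdef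
  have hek : ∀ k, HasSum (fun i => F i k) (‖(ρ - σ) (e k)‖ ^ 2) :=
    fun k => my_parseval u _
  have hik : ∀ i, HasSum (fun k => F i k) (‖(ρ - σ) (u i)‖ ^ 2) := by
    intro i
    refine (my_parseval e ((ρ - σ) (u i))).congr_fun fun k => ?_
    simp only [hFdef]
    rw [← hAsa (u i) (e k), norm_inner_symm]
  -- summability infrastructure
  have hswap : Summable (Function.uncurry fun j i => s j * c i j) := by
    refine (summable_prod_of_nonneg (fun p => mul_nonneg (hs _) (hcnn _ _))).mpr ⟨?_, ?_⟩
    · intro j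
      simp only [Function.uncurry_apply_pair]
      exact (hc2 j).summable.mul_left _
    · refine hs1.summable.congr fun j => ?_
      simp only [Function.uncurry_apply_pair]
      rw [tsum_mul_left, (hc2 j).tsum_eq, mul_one]
  have hswap' : Summable (Function.uncurry fun i j => s j * c i j) := by
    have h := (Equiv.prodComm I I).summable_iff.mpr hswap
    exact h.congr fun p => rfl
  obtain ⟨hsi, hm⟩ := (summable_prod_of_nonneg
    (fun p => mul_nonneg (hs _) (hcnn _ _))).mp hswap'
  have hEi : ∀ i, Summable fun j => r i * c i j + s j * c i j :=
    fun i => ((hc1 i).summable.mul_left _).add (hsi i)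
  have hEsum : ∀ i, ∑' j, (r i * c i j + s j * c i j) = r i + ∑' j, s j * c i j := by
    intro i
    rw [Summable.tsum_add ((hc1 i).summable.mul_left _) (hsi i), tsum_mul_left, (hc1 i).tsum_eq, mul_one]
  have hDle : ∀ i j, |r i - s j| * c i j ≤ r i * c i j + s j * c i j := by
    intro i j
    have h1 : |r i - s j| ≤ r i + s j :=
      abs_le.mpr ⟨by linarith [hr i, hs j], by linarith [hr i, hs j]⟩
    calc |r i - s j| * c i j ≤ (r i + s j) * c i j :=
          mul_le_mul_of_nonneg_right h1 (hcnn i j)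
      _ = r i * c i j + s j * c i j := by ring
  have hgD : ∀ i j, (r i - s j) ^ 2 * c i j ≤ |r i - s j| * c i j := by
    intro i j
    apply mul_le_mul_of_nonneg_right _ (hcnn i j)
    have h1 : |r i - s j| ≤ 1 :=
      abs_le.mpr ⟨by linarith [hs' j, hr i], by linarith [hr' i, hs j]⟩
    calc (r i - s j) ^ 2 = |r i - s j| * |r i - s j| := by rw [← sq_abs]; ring
      _ ≤ 1 * |r i - s j| := mul_le_mul_of_nonneg_right h1 (abs_nonneg _)
      _ = |r i - s j| := one_mul _
  have hDi : ∀ i, Summable fun j => |r i - s j| * c i j := fun i =>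
    Summable.of_nonneg_of_le (fun j => mul_nonneg (abs_nonneg _) (hcnn i j)) (hDle i) (hEi i)
  have hDsum_le : ∀ i, ∑' j, |r i - s j| * c i j ≤ r i + ∑' j, s j * c i j := fun i =>
    (Summable.tsum_le_tsum (hDle i) (hDi i) (hEi i)).trans_eq (hEsum i)
  have hAle : ∀ i, ‖(ρ - σ) (u i)‖ ^ 2 ≤ ∑' j, |r i - s j| * c i j := by
    intro i
    rw [← (hAu i).tsum_eq]
    exact Summable.tsum_le_tsum (fun j => hgD i j) (hAu i).summable (hDi i)
  have hBsum : Summable fun i => r i + ∑' j, s j * c i j := hr1.summable.add hm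
  have hAsum : Summable fun i => ‖(ρ - σ) (u i)‖ ^ 2 :=
    Summable.of_nonneg_of_le (fun i => by positivity)
      (fun i => (hAle i).trans (hDsum_le i)) hBsum
  have hDtsum : Summable fun i => ∑' j, |r i - s j| * c i j :=
    Summable.of_nonneg_of_le
      (fun i => tsum_nonneg fun j => mul_nonneg (abs_nonneg _) (hcnn i j)) hDsum_le hBsum
  have hDprod : Summable (Function.uncurry fun i j => |r i - s j| * c i j) :=
    (summable_prod_of_nonneg (fun p => mul_nonneg (abs_nonneg _) (hcnn _ _))).mpr ⟨hDi, hDtsum⟩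
  have hF : Summable (Function.uncurry F) :=
    (summable_prod_of_nonneg (fun p => by simp only [hFdef, Function.uncurry]; positivity)).mpr
      ⟨fun i => (hik i).summable, hAsum.congr fun i => ((hik i).tsum_eq).symm⟩
  calc ∑' k, ‖(ρ - σ) (e k)‖ ^ 2
      = ∑' (k) (i), F i k := tsum_congr fun k => (hek k).tsum_eq.symm
    _ = ∑' (i) (k), F i k :=
        Summable.tsum_comm' hF (fun i => (hik i).summable) (fun k => (hek k).summable)
    _ = ∑' i, ‖(ρ - σ) (u i)‖ ^ 2 := tsum_congr fun i => (hik i).tsum_eq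
    _ ≤ ∑' (i) (j), |r i - s j| * c i j := Summable.tsum_le_tsum hAle hAsum hDtsum
    _ = ∑' p : I × I, |r p.1 - s p.2| * c p.1 p.2 := (Summable.tsum_prod' hDprod hDi).symm
    _ = ∑' p : I × I, |r p.1 * c p.1 p.2 - s p.2 * c p.1 p.2| := by
        refine tsum_congr fun p => ?_
        rw [show r p.1 * c p.1 p.2 - s p.2 * c p.1 p.2 = (r p.1 - s p.2) * c p.1 p.2 from by ring,
          abs_mul, abs_of_nonneg (hcnn _ _)]
    _ = _ := rfl
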